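/- For every j ∈ {1,2} and every Q ≠ P in ℝ², the j-th column of H̃ is divergence-free in Q: ∑_{k=1}^{2} ∂H̃_{kj}(Q,P)/∂q_k = 0. -/

import Mathlib

set_option maxHeartbeats 1600000


open Real

/-- Partial derivative of a scalar function on ℝ² with respect to the `k`-th coordinate. -/
noncomputable def pd2 (f : EuclideanSpace ℝ (Fin 2) → ℝ) (k : Fin 2)
    (Q : EuclideanSpace ℝ (Fin 2)) : ℝ :=
  fderiv ℝ f Q (EuclideanSpace.single k 1)

lemma twoD_H_key (P Q : EuclideanSpace ℝ (Fin 2)) (hQ : Q ≠ P) (k j : Fin 2) :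
    pd2 (fun Q'' =>
          (1 / 32) *
            ((if k = j then (1 : ℝ) else 0) * ‖Q'' - P‖ ^ 2 *
                (17 - 12 * Real.log ‖Q'' - P‖) +
              2 * (Q'' - P) k * (Q'' - P) j * (4 * Real.log ‖Q'' - P‖ - 5))) k Q =
    (1/32) * ((if k = j then (1:ℝ) else 0) * ((Q k - P k) * (22 - 24 * Real.log ‖Q - P‖))
      + 8 * (Q k - P k)^2 * (Q j - P j) / ‖Q - P‖^2
      + (if j = k then (Q k - P k) * (8 * Real.log ‖Q - P‖ - 10) else 0)
      + (Q j - P j) * (8 * Real.log ‖Q - P‖ - 10)) := by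
  have hR : Q - P ≠ 0 := sub_ne_zero.mpr hQ
  have hs : (‖Q - P‖ ^ 2 : ℝ) ≠ 0 := pow_ne_zero _ (norm_ne_zero_iff.mpr hR)
  have hfun : (fun Q'' : EuclideanSpace ℝ (Fin 2) => (1 / 32 : ℝ) *
        ((if k = j then (1 : ℝ) else 0) * ‖Q'' - P‖ ^ 2 *
        (17 - 12 * Real.log ‖Q'' - P‖) +
      2 * (Q'' - P) k * (Q'' - P) j * (4 * Real.log ‖Q'' - P‖ - 5)))
      = (fun x : EuclideanSpace ℝ (Fin 2) => (1 / 32 : ℝ) *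
        ((if k = j then (1 : ℝ) else 0) * ‖x - P‖ ^ 2 *
        (17 - 6 * Real.log (‖x - P‖ ^ 2)) +
      2 * (x - P) k * (x - P) j * (2 * Real.log (‖x - P‖ ^ 2) - 5))) := by
    funext x
    rw [Real.log_pow]
    push_cast
    ring
  have hS : HasFDerivAt (fun x : EuclideanSpace ℝ (Fin 2) => ‖x - P‖ ^ 2)
      ((2:ℕ) • (innerSL ℝ (Q - P)).comp (ContinuousLinearMap.id ℝ _)) Q :=
    ((hasFDerivAt_id Q).sub_const P).norm_sq
  have hL := hS.log hs
  have hCk : HasFDerivAt (fun x : EuclideanSpace ℝ (Fin 2) => (x - P) k)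
      (EuclideanSpace.proj k : EuclideanSpace ℝ (Fin 2) →L[ℝ] ℝ) Q :=
    ((EuclideanSpace.proj k : EuclideanSpace ℝ (Fin 2) →L[ℝ] ℝ).hasFDerivAt (x := Q)).sub_const (P k)
  have hCj : HasFDerivAt (fun x : EuclideanSpace ℝ (Fin 2) => (x - P) j)
      (EuclideanSpace.proj j : EuclideanSpace ℝ (Fin 2) →L[ℝ] ℝ) Q :=
    ((EuclideanSpace.proj j : EuclideanSpace ℝ (Fin 2) →L[ℝ] ℝ).hasFDerivAt (x := Q)).sub_const (P j)
  have hG := (((hS.const_mul (if k = j then (1:ℝ) else 0)).mul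
      ((hL.const_mul 6).const_sub 17)).add
      (((hCk.const_mul 2).mul hCj).mul ((hL.const_mul 2).sub_const 5))).const_mul (1/32 : ℝ)
  erw [pd2, hfun, hG.fderiv]
  simp [ContinuousLinearMap.smul_apply, innerSL_apply_apply, EuclideanSpace.inner_single_right,
    EuclideanSpace.single_apply, PiLp.inner_apply]
  fin_cases k <;> fin_cases j <;> simp [PiLp.inner_apply, Fin.sum_univ_two] <;> field_simp <;> ring

/-- Each column of the 2D H̃-function is divergence-free in Q:
∑_k ∂H̃_{kj}/∂q_k = 0 for Q ≠ P. -/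
theorem twoD_H_column_divergence_free
    (P : EuclideanSpace ℝ (Fin 2))
    (j : Fin 2) (Q : EuclideanSpace ℝ (Fin 2)) (hQ : Q ≠ P) :
    (∑ k : Fin 2,
        pd2 (fun Q'' =>
          (1 / 32) *
            ((if k = j then (1 : ℝ) else 0) * ‖Q'' - P‖ ^ 2 *
                (17 - 12 * Real.log ‖Q'' - P‖) +
              2 * (Q'' - P) k * (Q'' - P) j * (4 * Real.log ‖Q'' - P‖ - 5))) k Q) = 0 := by
  have hR : Q - P ≠ 0 := sub_ne_zero.mpr hQ
  have hnorm : ‖Q - P‖ ^ 2 = (Q 0 - P 0) ^ 2 + (Q 1 - P 1) ^ 2 := by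
    rw [EuclideanSpace.norm_eq, Real.sq_sqrt (by positivity)]
    simp [Fin.sum_univ_two, sq_abs]
  have hs : ((Q 0 - P 0) ^ 2 + (Q 1 - P 1) ^ 2 : ℝ) ≠ 0 := by
    rw [← hnorm]
    exact pow_ne_zero _ (norm_ne_zero_iff.mpr hR)
  rw [Fin.sum_univ_two, twoD_H_key P Q hQ 0 j, twoD_H_key P Q hQ 1 j, hnorm]
  fin_cases j <;> simp <;> field_simp <;> ring
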